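/- Suppose p satisfies the Chapman–Kolmogorov equations with respect to a σ-finite measure m on X. Let η > 0, u₀ ∈ ℝ, and let μ = η·(ε_{u₀} ⊗ m), where ε_{u₀} is the Dirac measure at u₀, so that μ is concentrated on {u₀} × X. Then for all (s,x), (t,y) ∈ E: p^μ(s,x,t,y) = Σ_{n=0}^∞ p_n^μ(s,x,t,y) equals (1+η)·p(s,x,t,y) if s < u₀ < t, and equals p(s,x,t,y) otherwise. (In fact p₁^μ(s,x,t,y) = η·p(s,x,t,y)·1_{s<u₀<t} and p_n^μ = 0 for all n ≥ 2.) -/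

import Mathlib

open MeasureTheory
open scoped ENNReal NNReal

/-- The iterated perturbation terms: `p₀^μ = p`,
`p_n^μ(s,x,t,y) = ∫ p_{n−1}^μ(s,x,u,z)·p(u,z,t,y) dμ(u,z)`. -/
noncomputable def pITer {X : Type*} [MeasurableSpace X]
    (p : ℝ × X → ℝ × X → ℝ≥0∞) (μ : Measure (ℝ × X)) : ℕ → ℝ × X → ℝ × X → ℝ≥0∞
  | 0 => p
  | n + 1 => fun a b => ∫⁻ w, pITer p μ n a w * p w b ∂μ

/-- Perturbation by `μ = η·(ε_{u₀} ⊗ m)`: `p^μ = (1+η)p` if `s < u₀ < t` and `p^μ = p`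
otherwise; in fact `p₁^μ = η·p·1_{s<u₀<t}` and `p_n^μ = 0` for `n ≥ 2`. -/
theorem stmt_14 {X : Type*} [MeasurableSpace X]
    (p : ℝ × X → ℝ × X → ℝ≥0∞)
    (hp : Measurable fun q : (ℝ × X) × (ℝ × X) => p q.1 q.2)
    (hvan : ∀ (s t : ℝ) (x y : X), t ≤ s → p (s, x) (t, y) = 0)
    (m : Measure X) [SigmaFinite m]
    (hCK : ∀ (s u t : ℝ), s < u → u < t → ∀ (x y : X),
      p (s, x) (t, y) = ∫⁻ z, p (s, x) (u, z) * p (u, z) (t, y) ∂m)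
    (η : ℝ≥0) (hη : 0 < η) (u₀ : ℝ)
    (μ : Measure (ℝ × X)) (hμ : μ = (η : ℝ≥0∞) • (Measure.dirac u₀).prod m) :
    ∀ (s t : ℝ) (x y : X),
      (∑' n : ℕ, pITer p μ n (s, x) (t, y)
        = if s < u₀ ∧ u₀ < t then (1 + (η : ℝ≥0∞)) * p (s, x) (t, y)
          else p (s, x) (t, y)) ∧
      (pITer p μ 1 (s, x) (t, y)
        = if s < u₀ ∧ u₀ < t then (η : ℝ≥0∞) * p (s, x) (t, y) else 0) ∧
      (∀ n : ℕ, 2 ≤ n → pITer p μ n (s, x) (t, y) = 0) := by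

  -- integral over μ of a measurable function
  have hint : ∀ (f : ℝ × X → ℝ≥0∞), Measurable f →
      ∫⁻ w, f w ∂μ = (η : ℝ≥0∞) * ∫⁻ z, f (u₀, z) ∂m := by
    intro f hf
    rw [hμ, lintegral_smul_measure, Measure.dirac_prod,
      lintegral_map hf measurable_prodMk_left, smul_eq_mul]
  -- μ is concentrated on {u₀} × X
  have haezero : ∀ (F : ℝ × X → ℝ≥0∞), (∀ z, F (u₀, z) = 0) → ∫⁻ w, F w ∂μ = 0 := by
    intro F hF
    have hset : μ {w : ℝ × X | w.1 ≠ u₀} = 0 := by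
      have heq : {w : ℝ × X | w.1 ≠ u₀} = Prod.fst ⁻¹' ({u₀}ᶜ) := rfl
      rw [hμ, Measure.smul_apply, Measure.dirac_prod, heq,
        Measure.map_apply measurable_prodMk_left
          ((measurableSet_singleton u₀).compl.preimage measurable_fst)]
      simp only [Set.preimage_compl, smul_eq_mul, mul_eq_zero]
      right
      have : (Prod.mk u₀ ⁻¹' (Prod.fst ⁻¹' {u₀}))ᶜ = (∅ : Set X) := by
        ext z; simp
      rw [this]
      exact measure_empty
    have hae : F =ᵐ[μ] 0 := by
      refine measure_mono_null ?_ hset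
      intro w hw
      simp only [Set.mem_setOf_eq, Set.mem_compl_iff] at hw ⊢
      intro h1
      apply hw
      have : w = (u₀, w.2) := by rw [← h1]
      rw [this, hF]
      rfl
    rw [lintegral_congr_ae hae]
    simp
  have hmeasl : ∀ a : ℝ × X, Measurable (fun w => p a w) :=
    fun a => hp.comp measurable_prodMk_left
  have hmeasr : ∀ b : ℝ × X, Measurable (fun w => p w b) :=
    fun b => hp.comp (measurable_id.prodMk measurable_const)
  -- iterates vanish at second argument on {u₀} × X for n ≥ 1
  have hvan1 : ∀ n : ℕ, ∀ a : ℝ × X, ∀ z : X, pITer p μ (n + 1) a (u₀, z) = 0 := by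
    intro n a z
    show (∫⁻ w, pITer p μ n a w * p w (u₀, z) ∂μ) = 0
    apply haezero
    intro z'
    rw [hvan u₀ u₀ z' z le_rfl, mul_zero]
  -- iterates vanish for n ≥ 2
  have hzero : ∀ n : ℕ, 2 ≤ n → ∀ a b : ℝ × X, pITer p μ n a b = 0 := by
    intro n hn a b
    obtain ⟨k, rfl⟩ : ∃ k, n = (k + 1) + 1 := ⟨n - 2, by omega⟩
    show (∫⁻ w, pITer p μ (k + 1) a w * p w b ∂μ) = 0
    apply haezero
    intro z'
    rw [hvan1 k a z', zero_mul]
  intro s t x y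
  have h1 : pITer p μ 1 (s, x) (t, y)
      = if s < u₀ ∧ u₀ < t then (η : ℝ≥0∞) * p (s, x) (t, y) else 0 := by
    show (∫⁻ w, pITer p μ 0 (s, x) w * p w (t, y) ∂μ) = _
    have : (∫⁻ w, pITer p μ 0 (s, x) w * p w (t, y) ∂μ)
        = (η : ℝ≥0∞) * ∫⁻ z, p (s, x) (u₀, z) * p (u₀, z) (t, y) ∂m :=
      hint _ ((hmeasl (s, x)).mul (hmeasr (t, y)))
    rw [this]
    split_ifs with h
    · rw [← hCK s u₀ t h.1 h.2 x y]
    · rw [not_and_or] at h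
      rcases h with h | h
      · push_neg at h
        have : ∀ z : X, p (s, x) (u₀, z) * p (u₀, z) (t, y) = 0 := fun z => by
          rw [hvan s u₀ x z h, zero_mul]
        simp only [this, lintegral_zero, mul_zero]
      · push_neg at h
        have : ∀ z : X, p (s, x) (u₀, z) * p (u₀, z) (t, y) = 0 := fun z => by
          rw [hvan u₀ t z y h, mul_zero]
        simp only [this, lintegral_zero, mul_zero]
  refine ⟨?_, h1, fun n hn => hzero n hn _ _⟩
  have hnot : ∀ n ∉ ({0, 1} : Finset ℕ), pITer p μ n (s, x) (t, y) = 0 := by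
    intro n hn
    apply hzero n _ _ _
    simp only [Finset.mem_insert, Finset.mem_singleton] at hn
    omega
  rw [tsum_eq_sum hnot]
  rw [Finset.sum_pair (by norm_num : (0 : ℕ) ≠ 1)]
  show p (s, x) (t, y) + pITer p μ 1 (s, x) (t, y) = _
  rw [h1]
  split_ifs with h
  · rw [add_mul, one_mul]
  · rw [add_zero]
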